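/- Let v₁, …, vₙ be valuation functions on the cake [0,1]. If for every ε > 0 there exists a connected ε-envy-free allocation for the n agents, then there exists a connected envy-free allocation. -/

import Mathlib

open Set Filter Topology

/-- A valuation function on the cake `[0,1]`. -/
def IsValuation (v : ℝ → ℝ → ℝ) : Prop :=
  ContinuousOn (fun p : ℝ × ℝ => v p.1 p.2) (Icc 0 1 ×ˢ Icc 0 1) ∧
  (∀ a ∈ Icc (0:ℝ) 1, ∀ b ∈ Icc (0:ℝ) 1, v a b ∈ Icc (0:ℝ) 1) ∧
  (∀ a ∈ Icc (0:ℝ) 1, ∀ b ∈ Icc (0:ℝ) 1, b ≤ a → v a b = 0)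

/-- There is a connected `ε`-envy-free allocation for the `n` agents with valuations `v`:
cuts `0 = c 0 ≤ c 1 ≤ ⋯ ≤ c n = 1`, pieces `P j = [c j, c (j+1)]`, and a bijection `π`
assigning pieces to agents such that no agent envies another by more than `ε`. -/
def ExistsEFAlloc (n : ℕ) (v : Fin n → ℝ → ℝ → ℝ) (ε : ℝ) : Prop :=
  ∃ c : Fin (n + 1) → ℝ, c 0 = 0 ∧ c (Fin.last n) = 1 ∧
    (∀ j : Fin n, c j.castSucc ≤ c j.succ) ∧
    ∃ π : Equiv.Perm (Fin n),
      ∀ i j : Fin n,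
        v i (c j.castSucc) (c j.succ) - ε ≤ v i (c (π i).castSucc) (c (π i).succ)

private lemma tendsto_val_aux {v : ℝ → ℝ → ℝ}
    (hv : ContinuousOn (fun p : ℝ × ℝ => v p.1 p.2) (Icc 0 1 ×ˢ Icc 0 1))
    {a b : ℕ → ℝ} {A B : ℝ} (ha : ∀ m, a m ∈ Icc (0:ℝ) 1) (hb : ∀ m, b m ∈ Icc (0:ℝ) 1)
    (hA : A ∈ Icc (0:ℝ) 1) (hB : B ∈ Icc (0:ℝ) 1)
    (hta : Filter.Tendsto a Filter.atTop (𝓝 A))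
    (htb : Filter.Tendsto b Filter.atTop (𝓝 B)) :
    Filter.Tendsto (fun m => v (a m) (b m)) Filter.atTop (𝓝 (v A B)) := by
  have hcw : ContinuousWithinAt (fun p : ℝ × ℝ => v p.1 p.2) (Icc 0 1 ×ˢ Icc 0 1) (A, B) :=
    hv (A, B) ⟨hA, hB⟩
  have hpair : Filter.Tendsto (fun m => (a m, b m)) Filter.atTop
      (𝓝[Icc (0:ℝ) 1 ×ˢ Icc (0:ℝ) 1] (A, B)) := by
    rw [tendsto_nhdsWithin_iff]
    exact ⟨hta.prodMk_nhds htb, Filter.Eventually.of_forall fun m => ⟨ha m, hb m⟩⟩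
  exact hcw.tendsto.comp hpair

/-- if for every `ε > 0` a connected `ε`-envy-free allocation exists, then
a connected envy-free allocation exists. -/
theorem exists_envyFree_of_forall_eps (n : ℕ) (v : Fin n → ℝ → ℝ → ℝ)
    (hval : ∀ i, IsValuation (v i))
    (h : ∀ ε : ℝ, 0 < ε → ExistsEFAlloc n v ε) :
    ExistsEFAlloc n v 0 := by
  classical
  have H : ∀ k : ℕ, ∃ c : Fin (n+1) → ℝ,
      (c 0 = 0 ∧ c (Fin.last n) = 1 ∧ (∀ j : Fin n, c j.castSucc ≤ c j.succ)) ∧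
      ∃ π : Equiv.Perm (Fin n), ∀ i j : Fin n,
        v i (c j.castSucc) (c j.succ) - (1/(k+1) : ℝ)
          ≤ v i (c (π i).castSucc) (c (π i).succ) := by
    intro k
    obtain ⟨c, h1, h2, h3, π, h4⟩ := h (1/(k+1)) (by positivity)
    exact ⟨c, ⟨h1, h2, h3⟩, π, h4⟩
  choose c hc π hπ using H
  -- each c k is monotone with values in [0,1]
  have hmono : ∀ k, Monotone (c k) := fun k =>
    Fin.monotone_iff_le_succ.mpr (hc k).2.2
  have hmem : ∀ k j, c k j ∈ Icc (0:ℝ) 1 := by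
    intro k j
    constructor
    · rw [← (hc k).1]; exact hmono k (Fin.zero_le j)
    · rw [← (hc k).2.1]; exact hmono k (Fin.le_last j)
  -- extract a subsequence with constant permutation
  obtain ⟨π₀, hπ₀⟩ : ∃ π₀ : Equiv.Perm (Fin n), {k | π k = π₀}.Infinite := by
    by_contra hcon
    push_neg at hcon
    have : (Set.univ : Set ℕ).Finite := by
      have : (Set.univ : Set ℕ) ⊆ ⋃ π₀, {k | π k = π₀} := fun k _ =>
        Set.mem_iUnion.mpr ⟨π k, rfl⟩
      exact ((Set.finite_iUnion hcon).subset this)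
    exact Set.infinite_univ this
  obtain ⟨ψ, hψmono, hψ⟩ := Filter.extraction_of_frequently_atTop
    (Nat.frequently_atTop_iff_infinite.mpr hπ₀)
  -- extract a convergent subsequence of cut vectors
  have hScomp : IsCompact (Set.pi Set.univ fun _ : Fin (n+1) => Icc (0:ℝ) 1) :=
    isCompact_univ_pi fun _ => isCompact_Icc
  obtain ⟨L, hLmem, φ, hφmono, hφ⟩ := hScomp.tendsto_subseq
    (x := fun m => c (ψ m)) (fun m => fun j _ => hmem (ψ m) j)
  set θ : ℕ → ℕ := ψ ∘ φ with hθ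
  have hθπ : ∀ m, π (θ m) = π₀ := fun m => hψ (φ m)
  have hLj : ∀ j, Filter.Tendsto (fun m => c (θ m) j) Filter.atTop (𝓝 (L j)) := by
    intro j
    have := tendsto_pi_nhds.mp hφ j
    exact this
  have hLmem' : ∀ j, L j ∈ Icc (0:ℝ) 1 := fun j => hLmem j (Set.mem_univ j)
  -- ε_k subsequence tends to 0
  have hθat : Filter.Tendsto θ Filter.atTop Filter.atTop :=
    (hψmono.comp hφmono).tendsto_atTop
  have heps : Filter.Tendsto (fun m => (1 / (θ m + 1) : ℝ)) Filter.atTop (𝓝 0) :=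
    tendsto_one_div_add_atTop_nhds_zero_nat.comp hθat
  refine ⟨L, ?_, ?_, ?_, π₀, ?_⟩
  · exact tendsto_nhds_unique (hLj 0) (by simp [(hc _).1])
  · exact tendsto_nhds_unique (hLj (Fin.last n))
      (by simp [(hc _).2.1])
  · intro j
    exact le_of_tendsto_of_tendsto' (hLj j.castSucc) (hLj j.succ)
      (fun m => (hc (θ m)).2.2 j)
  · intro i j
    have hv := (hval i).1
    have h1 : Filter.Tendsto
        (fun m => v i (c (θ m) j.castSucc) (c (θ m) j.succ) - (1/(θ m + 1) : ℝ))
        Filter.atTop (𝓝 (v i (L j.castSucc) (L j.succ) - 0)) :=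
      (tendsto_val_aux hv (fun m => hmem (θ m) j.castSucc) (fun m => hmem (θ m) j.succ)
        (hLmem' j.castSucc) (hLmem' j.succ) (hLj j.castSucc) (hLj j.succ)).sub heps
    have h2 : Filter.Tendsto
        (fun m => v i (c (θ m) (π₀ i).castSucc) (c (θ m) (π₀ i).succ))
        Filter.atTop (𝓝 (v i (L (π₀ i).castSucc) (L (π₀ i).succ))) :=
      tendsto_val_aux hv (fun m => hmem (θ m) (π₀ i).castSucc)
        (fun m => hmem (θ m) (π₀ i).succ)
        (hLmem' (π₀ i).castSucc) (hLmem' (π₀ i).succ)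
        (hLj (π₀ i).castSucc) (hLj (π₀ i).succ)
    have hle : ∀ m, v i (c (θ m) j.castSucc) (c (θ m) j.succ) - (1/(θ m + 1) : ℝ)
        ≤ v i (c (θ m) (π₀ i).castSucc) (c (θ m) (π₀ i).succ) := by
      intro m
      have := hπ (θ m) i j
      rwa [hθπ m] at this
    have := le_of_tendsto_of_tendsto' h1 h2 hle
    simpa using this
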